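/- Fix d ≥ 2 and n ≥ 1, let φ(t) = t²/2 and W = 1_n 1_nᵀ. If X ∈ ℝ^{d×n} with unit-norm columns is critical for f and has negative-semidefinite Hessian, then rank(X) < d. -/

import Mathlib

open Matrix

noncomputable section

/-- Frobenius inner product `⟨A,B⟩ = ∑ᵢⱼ Aᵢⱼ Bᵢⱼ`. -/
def frob {ι κ : Type*} [Fintype ι] [Fintype κ] (A B : Matrix ι κ ℝ) : ℝ :=
  ∑ i, ∑ j, A i j * B i j

/-- `ddiag` zeroes out all off-diagonal entries of a square matrix. -/
def ddiag {ι : Type*} [Fintype ι] [DecidableEq ι] (M : Matrix ι ι ℝ) : Matrix ι ι ℝ :=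
  Matrix.diagonal fun i => M i i

/-- Graph Laplacian `L(M) = diag(M 1) − M`. -/
def lap {ι : Type*} [Fintype ι] [DecidableEq ι] (M : Matrix ι ι ℝ) : Matrix ι ι ℝ :=
  Matrix.diagonal (fun i => ∑ j, M i j) - M

/-- `X` has unit-norm columns. -/
def unitCols {d : ℕ} {ι : Type*} [Fintype ι] (X : Matrix (Fin d) ι ℝ) : Prop :=
  ∀ j, ∑ i, X i j ^ 2 = 1

/-- `A = W ⊙ φ'(XᵀX)` (`d1` playing the role of `φ'`). -/
def Amat {d : ℕ} {ι : Type*} [Fintype ι] (W : Matrix ι ι ℝ) (X : Matrix (Fin d) ι ℝ)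
    (d1 : ℝ → ℝ) : Matrix ι ι ℝ :=
  Matrix.hadamard W ((Xᵀ * X).map d1)

/-- `S = ddiag(XᵀXA) − A`. -/
def Smat {d : ℕ} {ι : Type*} [Fintype ι] [DecidableEq ι] (W : Matrix ι ι ℝ)
    (X : Matrix (Fin d) ι ℝ) (d1 : ℝ → ℝ) : Matrix ι ι ℝ :=
  ddiag ((Xᵀ * X) * Amat W X d1) - Amat W X d1

/-- First-order criticality: `X S = 0`, i.e. `X·ddiag(XᵀXA) = XA`
(vanishing Riemannian gradient on the product of spheres). -/
def IsCritical {d : ℕ} {ι : Type*} [Fintype ι] [DecidableEq ι] (W : Matrix ι ι ℝ)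
    (X : Matrix (Fin d) ι ℝ) (d1 : ℝ → ℝ) : Prop :=
  X * Smat W X d1 = 0

/-- The Riemannian Hessian quadratic form of `f` at `X` is negative semidefinite:
`−⟨ẊᵀẊ, S⟩ + (1/2)⟨(XᵀẊ + ẊᵀX)^{⊙2}, W ⊙ φ''(XᵀX)⟩ ≤ 0` for all tangent `Ẋ`. -/
def HessNegSemidef {d : ℕ} {ι : Type*} [Fintype ι] [DecidableEq ι] (W : Matrix ι ι ℝ)
    (X : Matrix (Fin d) ι ℝ) (d1 d2 : ℝ → ℝ) : Prop :=
  ∀ V : Matrix (Fin d) ι ℝ, (∀ j, (Xᵀ * V) j j = 0) →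
    -(frob (Vᵀ * V) (Smat W X d1))
      + (1 / 2) * frob ((Xᵀ * V + Vᵀ * X).map fun t => t ^ 2)
          (Matrix.hadamard W ((Xᵀ * X).map d2)) ≤ 0

/-- The graph with an edge `{i,j}` whenever `w_ij > 0` is connected. -/
def ConnectedW {ι : Type*} (W : Matrix ι ι ℝ) : Prop :=
  (SimpleGraph.fromRel fun i j => 0 < W i j).Connected

/-- `f(Y) = (1/2)⟨W, φ(YᵀY)⟩`. -/
def fval {d : ℕ} {ι : Type*} [Fintype ι] (W : Matrix ι ι ℝ) (φ : ℝ → ℝ)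
    (Y : Matrix (Fin d) ι ℝ) : ℝ :=
  (1 / 2) * frob W ((Yᵀ * Y).map φ)

/-- `h(t) = tφ'(t) − (1−t²)φ''(t)`. -/
def hfun (d1 d2 : ℝ → ℝ) (t : ℝ) : ℝ := t * d1 t - (1 - t ^ 2) * d2 t

/-- The matrix `M` with `m_ij = w_ij · h(x_iᵀx_j)`. -/
def Mmat {d : ℕ} {ι : Type*} [Fintype ι] (W : Matrix ι ι ℝ) (X : Matrix (Fin d) ι ℝ)
    (d1 d2 : ℝ → ℝ) : Matrix ι ι ℝ :=
  Matrix.of fun i j => W i j * hfun d1 d2 ((Xᵀ * X) i j)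

/-- The kernel of `L` is exactly `span(1)`. -/
def KernelIsConst {ι : Type*} [Fintype ι] [DecidableEq ι] (L : Matrix ι ι ℝ) : Prop :=
  ∀ α : ι → ℝ, L.mulVec α = 0 ↔ ∃ c : ℝ, ∀ k, α k = c

/-- The regular `n`-gon configuration on the unit circle. -/
def ngon (n : ℕ) : Matrix (Fin 2) (Fin n) ℝ :=
  Matrix.of fun a j =>
    if a = 0 then Real.cos (2 * Real.pi * (j : ℝ) / (n : ℝ))
    else Real.sin (2 * Real.pi * (j : ℝ) / (n : ℝ))

/-- The log-sum-exp smoothing `φ_{ε,τ}(t) = ε·log(1 + e^{(t−τ)/ε})` of the ReLU. -/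
def philse (ε τ : ℝ) : ℝ → ℝ := fun t => ε * Real.log (1 + Real.exp ((t - τ) / ε))

/-- for `φ(t) = t²/2` and the complete unit-weight graph, second-order
critical points are rank deficient: `rank(X) < d`. -/
theorem quadratic_rank_deficient
    {d n : ℕ} (hd : 2 ≤ d) (hn : 1 ≤ n)
    (X : Matrix (Fin d) (Fin n) ℝ) (hX : unitCols X)
    (hcrit : IsCritical (Matrix.of fun _ _ => (1 : ℝ)) X (deriv fun t => t ^ 2 / 2))
    (hhess : HessNegSemidef (Matrix.of fun _ _ => (1 : ℝ)) X (deriv fun t => t ^ 2 / 2)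
      (deriv (deriv fun t => t ^ 2 / 2))) :
    X.rank < d := by
  -- derivatives of φ(t) = t²/2
  have hd1 : (deriv fun t : ℝ => t ^ 2 / 2) = fun t => t := by
    funext t; rw [deriv_div_const, deriv_pow_field]; ring
  have hd2 : (deriv (deriv fun t : ℝ => t ^ 2 / 2)) = fun _ => (1 : ℝ) := by
    rw [hd1]; funext t; exact deriv_id t
  rw [hd2, hd1] at hhess
  unfold IsCritical at hcrit
  rw [hd1] at hcrit
  set W : Matrix (Fin n) (Fin n) ℝ := Matrix.of fun _ _ => (1 : ℝ) with hW
  set G : Matrix (Fin n) (Fin n) ℝ := Xᵀ * X with hGdef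
  have hA : Amat W X (fun t => t) = G := by
    ext i j
    simp [Amat, Matrix.hadamard_apply, hW, hGdef]
  have hS : Smat W X (fun t => t) = ddiag (G * G) - G := by
    unfold Smat; rw [hA, ← hGdef]
  have hGsym : ∀ a b, G a b = G b a := by
    intro a b
    rw [hGdef]
    simp only [Matrix.mul_apply, Matrix.transpose_apply]
    exact Finset.sum_congr rfl fun i _ => mul_comm _ _
  have hGdiag : ∀ j, G j j = 1 := by
    intro j
    rw [hGdef]
    simp only [Matrix.mul_apply, Matrix.transpose_apply]
    rw [← hX j]
    exact Finset.sum_congr rfl fun i _ => (sq (X i j)).symm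
  set lam : Fin n → ℝ := fun j => (G * G) j j with hlam
  -- criticality gives (G*G) a b = G a b * lam b
  have hGG : ∀ a b, (G * G) a b = G a b * lam b := by
    have h0 : X * (ddiag (G * G) - G) = 0 := by rw [← hS]; exact hcrit
    have h1 : G * ddiag (G * G) - G * G = 0 := by
      rw [← Matrix.mul_sub, hGdef, Matrix.mul_assoc, ← hGdef, h0, Matrix.mul_zero]
    have h2 : G * ddiag (G * G) = G * G := by
      rw [← sub_eq_zero]; exact h1
    intro a b
    have h3 := congrFun (congrFun h2 a) b
    rw [ddiag, Matrix.mul_diagonal] at h3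
    exact h3.symm
  -- pick the column with minimal lam
  obtain ⟨j0, -, hj0⟩ := Finset.exists_min_image (Finset.univ : Finset (Fin n)) lam
    ⟨⟨0, hn⟩, Finset.mem_univ _⟩
  -- main claim: every column is a multiple of column j0
  have key : ∀ k a, X a k = G j0 k * X a j0 := by
    intro k
    set g : ℝ := G j0 k with hg
    set v : Fin d → ℝ := fun a => X a k - g * X a j0 with hv
    set q : Fin n → ℝ := fun l => ∑ a, X a l * v a with hq
    have hxv : ∀ l, q l = G l k - g * G l j0 := by
      intro l
      have e : ∀ a, X a l * v a = X a l * X a k - g * (X a l * X a j0) := by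
        intro a; rw [hv]; ring
      rw [hq]
      simp only []
      rw [Finset.sum_congr rfl fun a _ => e a, Finset.sum_sub_distrib, ← Finset.mul_sum]
      rw [hGdef]
      simp only [Matrix.mul_apply, Matrix.transpose_apply]
    have hq0 : q j0 = 0 := by rw [hxv j0, hGdiag, ← hg]; ring
    set V : Matrix (Fin d) (Fin n) ℝ := Matrix.of (fun a l => if l = j0 then v a else 0) with hV
    have htan : ∀ l, (Xᵀ * V) l l = 0 := by
      intro l
      simp only [Matrix.mul_apply, Matrix.transpose_apply, hV, Matrix.of_apply]
      by_cases hl : l = j0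
      · rw [hl]
        simpa [hq] using hq0
      · simp [hl]
    have H := hhess V htan
    -- compute the first Frobenius term
    have hVV : ∀ l m, (Vᵀ * V) l m =
        (if l = j0 then (1:ℝ) else 0) * (if m = j0 then (1:ℝ) else 0) * (∑ a, v a * v a) := by
      intro l m
      simp only [Matrix.mul_apply, Matrix.transpose_apply, hV, Matrix.of_apply]
      by_cases hl : l = j0 <;> by_cases hm : m = j0 <;> simp [hl, hm]
    have hfrob1 : frob (Vᵀ * V) (Smat W X (fun t => t))
        = (∑ a, v a * v a) * (lam j0 - 1) := by
      rw [hS]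
      unfold frob
      rw [Finset.sum_eq_single j0 (fun l _ hl => by
            apply Finset.sum_eq_zero; intro m _; rw [hVV]; simp [hl])
          (by simp)]
      rw [Finset.sum_eq_single j0 (fun m _ hm => by rw [hVV]; simp [hm])
          (by simp)]
      rw [hVV, Matrix.sub_apply, ddiag, Matrix.diagonal_apply_eq, hGdiag]
      simp [hlam]
    -- compute the second Frobenius term
    have hM : ∀ l m, (Xᵀ * V + Vᵀ * X) l m =
        (if m = j0 then q l else 0) + (if l = j0 then q m else 0) := by
      intro l m
      simp only [Matrix.add_apply, Matrix.mul_apply, Matrix.transpose_apply, hV,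
        Matrix.of_apply, hq]
      by_cases hl : l = j0 <;> by_cases hm : m = j0 <;>
        simp [hl, hm, mul_comm]
    have hM2 : ∀ l m, (((Xᵀ * V + Vᵀ * X).map fun t => t ^ 2)) l m =
        (if m = j0 then q l ^ 2 else 0) + (if l = j0 then q m ^ 2 else 0) := by
      intro l m
      rw [Matrix.map_apply, hM]
      by_cases hl : l = j0 <;> by_cases hm : m = j0 <;> simp [hl, hm, hq0]
    have hW1 : ∀ l m, (Matrix.hadamard W ((Xᵀ * X).map fun _ => (1:ℝ))) l m = 1 := by
      intro l m
      simp [Matrix.hadamard_apply, hW, Matrix.map_apply]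
    have hfrob2 : frob ((Xᵀ * V + Vᵀ * X).map fun t => t ^ 2)
        (Matrix.hadamard W ((Xᵀ * X).map fun _ => (1:ℝ))) = 2 * ∑ l, q l ^ 2 := by
      unfold frob
      have e : ∀ l m, (((Xᵀ * V + Vᵀ * X).map fun t => t ^ 2)) l m
          * (Matrix.hadamard W ((Xᵀ * X).map fun _ => (1:ℝ))) l m
          = (if m = j0 then q l ^ 2 else 0) + (if l = j0 then q m ^ 2 else 0) := by
        intro l m; rw [hW1, mul_one, hM2]
      simp only [e]
      have e2 : ∀ l : Fin n,
          (∑ m, ((if m = j0 then q l ^ 2 else 0) + (if l = j0 then q m ^ 2 else 0)))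
          = q l ^ 2 + (if l = j0 then (∑ m, q m ^ 2) else 0) := by
        intro l
        rw [Finset.sum_add_distrib, Finset.sum_ite_eq' Finset.univ j0 (fun _ => q l ^ 2)]
        simp only [Finset.mem_univ, if_true]
        congr 1
        split_ifs <;> simp
      rw [Finset.sum_congr rfl fun l _ => e2 l, Finset.sum_add_distrib,
        Finset.sum_ite_eq' Finset.univ j0 (fun _ => ∑ m, q m ^ 2)]
      simp only [Finset.mem_univ, if_true]
      ring
    rw [hfrob1, hfrob2] at H
    -- evaluate the scalar quantities
    have hvv : (∑ a, v a * v a) = 1 - g ^ 2 := by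
      have e : ∀ a, v a * v a =
          X a k * X a k - 2 * g * (X a j0 * X a k) + g ^ 2 * (X a j0 * X a j0) := by
        intro a; rw [hv]; ring
      rw [Finset.sum_congr rfl fun a _ => e a, Finset.sum_add_distrib,
        Finset.sum_sub_distrib, ← Finset.mul_sum, ← Finset.mul_sum]
      have e1 : (∑ a, X a k * X a k) = G k k := by
        rw [hGdef]; simp [Matrix.mul_apply, Matrix.transpose_apply]
      have e2 : (∑ a, X a j0 * X a k) = G j0 k := by
        rw [hGdef]; simp [Matrix.mul_apply, Matrix.transpose_apply]
      have e3 : (∑ a, X a j0 * X a j0) = G j0 j0 := by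
        rw [hGdef]; simp [Matrix.mul_apply, Matrix.transpose_apply]
      rw [e1, e2, e3, hGdiag, hGdiag, ← hg]; ring
    have hqq : (∑ l, q l ^ 2) = lam k - g ^ 2 * lam j0 := by
      have e : ∀ l, q l ^ 2 =
          G l k * G l k - 2 * g * (G l k * G l j0) + g ^ 2 * (G l j0 * G l j0) := by
        intro l; rw [hxv l]; ring
      rw [Finset.sum_congr rfl fun l _ => e l, Finset.sum_add_distrib,
        Finset.sum_sub_distrib, ← Finset.mul_sum, ← Finset.mul_sum]
      have f1 : (∑ l, G l k * G l k) = ∑ l, G k l * G l k :=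
        Finset.sum_congr rfl fun l _ => by rw [hGsym l k]
      have e1 : (∑ l, G k l * G l k) = lam k := by
        rw [hlam]; simp [Matrix.mul_apply]
      have f2 : (∑ l, G l k * G l j0) = ∑ l, G k l * G l j0 :=
        Finset.sum_congr rfl fun l _ => by rw [hGsym l k]
      have e2 : (∑ l, G k l * G l j0) = g * lam j0 := by
        have h5 : (∑ l, G k l * G l j0) = (G * G) k j0 := by simp [Matrix.mul_apply]
        rw [h5, hGG k j0, hGsym k j0, ← hg]
      have f3 : (∑ l, G l j0 * G l j0) = ∑ l, G j0 l * G l j0 :=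
        Finset.sum_congr rfl fun l _ => by rw [hGsym l j0]
      have e3 : (∑ l, G j0 l * G l j0) = lam j0 := by
        rw [hlam]; simp [Matrix.mul_apply]
      rw [f1, e1, f2, e2, f3, e3]; ring
    rw [hvv, hqq] at H
    have hjk : lam j0 ≤ lam k := hj0 k (Finset.mem_univ k)
    have hg1 : 1 - g ^ 2 ≤ 0 := by nlinarith [H, hjk]
    have hsum0 : (∑ a, v a ^ 2) = 0 := by
      have hle : (∑ a, v a ^ 2) ≤ 0 := by
        have : (∑ a, v a ^ 2) = ∑ a, v a * v a :=
          Finset.sum_congr rfl fun a _ => sq (v a)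
        rw [this, hvv]; exact hg1
      exact le_antisymm hle (Finset.sum_nonneg fun a _ => sq_nonneg _)
    intro a
    have hva : v a = 0 := by
      have := (Finset.sum_eq_zero_iff_of_nonneg
        (fun i _ => sq_nonneg (v i))).mp hsum0 a (Finset.mem_univ a)
      exact (pow_eq_zero_iff two_ne_zero).mp this
    have : X a k - g * X a j0 = 0 := hva
    rw [hg] at this
    linarith [this]
  -- conclude: X has rank at most one
  have hXeq : X = Matrix.vecMulVec (fun a => X a j0) (fun k => G j0 k) := by
    ext a k
    rw [Matrix.vecMulVec_apply, mul_comm]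
    exact key k a
  have hr1 : X.rank ≤ 1 := by
    rw [hXeq, Matrix.vecMulVec_eq (Fin 1)]
    calc (Matrix.replicateCol (Fin 1) (fun a => X a j0) * Matrix.replicateRow (Fin 1) (fun k => G j0 k)).rank
        ≤ (Matrix.replicateCol (Fin 1) (fun a => X a j0)).rank := Matrix.rank_mul_le_left _ _
      _ ≤ Fintype.card (Fin 1) := Matrix.rank_le_card_width _
      _ = 1 := Fintype.card_fin 1
  omega
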